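/- (Tensor truncation beats matrix truncation.) Given matrices D_1,…,D_ℓ ∈ Matrix (Fin m) (Fin n) ℂ, form the matrix 𝐀 : Matrix (Fin m × Fin n) (Fin ℓ) ℂ with 𝐀 (a,i) j = (D j) a i and the m×ℓ×n tensor A with (A i) a j = (D j) a i. Let M = c • W with c ∈ ℂ, c ≠ 0 and W ∈ Matrix.unitaryGroup (Fin n) ℂ, let A = U ⋆_M S ⋆_M Vᴴ be a t-SVDM of A, let k ≤ min(m,ℓ), and let A_k be the t-rank-k truncation. Then for every matrix B : Matrix (Fin m × Fin n) (Fin ℓ) ℂ with rank B ≤ k, one has ‖A − A_k‖_F ≤ ‖𝐀 − B‖_F, where the right-hand norm is the matrix Frobenius norm. -/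

import Mathlib

open scoped BigOperators ComplexConjugate Matrix

noncomputable section

variable {R : Type*}

/-- Mode-3 product of a third-order tensor (encoded by its frontal slices)
with a transform matrix: `(A ×₃ M) i = ∑ j, (M i j) • (A j)`. -/
def mode3 [RCLike R] {ι α β : Type*} [Fintype ι]
    (A : ι → Matrix α β R) (M : Matrix ι ι R) : ι → Matrix α β R :=
  fun i => ∑ j, M i j • A j

/-- Frobenius (entrywise ℓ²) norm of a matrix. -/
def fnorm [RCLike R] {α β : Type*} [Fintype α] [Fintype β] (A : Matrix α β R) : ℝ :=
  Real.sqrt (∑ a, ∑ b, ‖A a b‖ ^ 2)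

/-- Frobenius norm of a tensor: `‖A‖² = ∑ i, ‖A i‖²`. -/
def tnorm [RCLike R] {ι α β : Type*} [Fintype ι] [Fintype α] [Fintype β]
    (A : ι → Matrix α β R) : ℝ :=
  Real.sqrt (∑ i, fnorm (A i) ^ 2)

/-- The ⋆_M product: facewise product in the transform domain, then inverse transform. -/
def tprodM [RCLike R] {ι m p q : Type*} [Fintype ι] [DecidableEq ι] [Fintype p]
    (M : Matrix ι ι R) (A : ι → Matrix m p R) (B : ι → Matrix p q R) :
    ι → Matrix m q R :=
  mode3 (fun i => mode3 A M i * mode3 B M i) M⁻¹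

/-- Conjugate transpose of a tensor under ⋆_M. -/
def tconj [RCLike R] {ι m p : Type*} [Fintype ι] [DecidableEq ι]
    (M : Matrix ι ι R) (A : ι → Matrix m p R) : ι → Matrix p m R :=
  mode3 (fun i => (mode3 A M i)ᴴ) M⁻¹

/-- The identity tensor under ⋆_M. -/
def tId [RCLike R] (m : Type*) [DecidableEq m] {ι : Type*} [Fintype ι] [DecidableEq ι]
    (M : Matrix ι ι R) : ι → Matrix m m R :=
  mode3 (fun _ => (1 : Matrix m m R)) M⁻¹

/-- A square tensor `Q` is ⋆_M-unitary if `Qᴴ ⋆_M Q = Q ⋆_M Qᴴ = I`. -/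
def tUnitary [RCLike R] {ι m : Type*} [Fintype ι] [DecidableEq ι] [Fintype m] [DecidableEq m]
    (M : Matrix ι ι R) (Q : ι → Matrix m m R) : Prop :=
  tprodM M (tconj M Q) Q = tId m M ∧ tprodM M Q (tconj M Q) = tId m M

/-- A t-SVDM of `A`: a factorization `A = U ⋆_M S ⋆_M Vᴴ` with `U`, `V` ⋆_M-unitary and every
transform-domain slice `Ŝ i` diagonal with real, nonnegative, nonincreasing diagonal entries. -/
def IsTSVDM [RCLike R] {m p n : ℕ} (M : Matrix (Fin n) (Fin n) R)
    (A : Fin n → Matrix (Fin m) (Fin p) R)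
    (U : Fin n → Matrix (Fin m) (Fin m) R)
    (S : Fin n → Matrix (Fin m) (Fin p) R)
    (V : Fin n → Matrix (Fin p) (Fin p) R) : Prop :=
  A = tprodM M (tprodM M U S) (tconj M V) ∧
  tUnitary M U ∧ tUnitary M V ∧
  (∀ (i : Fin n) (a : Fin m) (b : Fin p), (a : ℕ) ≠ (b : ℕ) → mode3 S M i a b = 0) ∧
  (∀ (i : Fin n) (a : Fin m) (b : Fin p), (a : ℕ) = (b : ℕ) →
      ∃ r : ℝ, 0 ≤ r ∧ mode3 S M i a b = (r : R)) ∧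
  (∀ (i : Fin n) (a a' : Fin m) (b b' : Fin p), (a : ℕ) = (b : ℕ) → (a' : ℕ) = (b' : ℕ) →
      (a : ℕ) ≤ (a' : ℕ) →
      RCLike.re (mode3 S M i a' b') ≤ RCLike.re (mode3 S M i a b))

/-- Transform-domain slice of a truncation:
(first k columns of Û) * (leading k×k block of Ŝ) * (first k columns of V̂)ᴴ. -/
def truncSlice [RCLike R] {m p : ℕ} (k : ℕ) (Uh : Matrix (Fin m) (Fin m) R)
    (Sh : Matrix (Fin m) (Fin p) R) (Vh : Matrix (Fin p) (Fin p) R) :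
    Matrix (Fin m) (Fin p) R :=
  Matrix.of fun a b =>
    ∑ j : Fin m, ∑ l : Fin p,
      if (j : ℕ) < k ∧ (l : ℕ) < k then Uh a j * Sh j l * star (Vh b l) else 0

/-- The multi-rank-ρ truncation of a t-SVDM (use `ρ = fun _ => k` for the t-rank-k truncation). -/
def truncTensor [RCLike R] {m p n : ℕ} (M : Matrix (Fin n) (Fin n) R)
    (U : Fin n → Matrix (Fin m) (Fin m) R) (S : Fin n → Matrix (Fin m) (Fin p) R)
    (V : Fin n → Matrix (Fin p) (Fin p) R) (ρ : Fin n → ℕ) :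
    Fin n → Matrix (Fin m) (Fin p) R :=
  mode3 (fun i => truncSlice (ρ i) (mode3 U M i) (mode3 S M i) (mode3 V M i)) M⁻¹

/-- The permuted tensor `Aᴾ`: `(Aᴾ c) i j = (A i) c j`. -/
def tperm [RCLike R] {m p n : ℕ} (A : Fin n → Matrix (Fin m) (Fin p) R) :
    Fin m → Matrix (Fin n) (Fin p) R :=
  fun c => Matrix.of fun i j => A i c j


namespace Stmt10Aux
open Matrix Module
open scoped ComplexConjugate

set_option linter.unusedSectionVars false
set_option maxHeartbeats 1600000

section mode3lemmas
variable {ι α β : Type*} [Fintype ι] [Fintype α] [Fintype β]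

lemma mode3_apply {A : ι → Matrix α β ℂ} {M : Matrix ι ι ℂ} (i : ι) (a : α) (b : β) :
    mode3 A M i a b = ∑ j, M i j * A j a b := by
  simp [mode3, Matrix.sum_apply]

lemma mode3_mode3 [DecidableEq ι] (A : ι → Matrix α β ℂ) (M N : Matrix ι ι ℂ) :
    mode3 (mode3 A M) N = mode3 A (N * M) := by
  funext i
  ext a b
  simp only [mode3_apply, Matrix.mul_apply, Finset.sum_mul]
  rw [Finset.sum_comm]
  congr 1; ext j
  simp [Finset.mul_sum, mul_assoc]

lemma mode3_one [DecidableEq ι] (A : ι → Matrix α β ℂ) : mode3 A 1 = A := by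
  funext i; ext a b
  simp [mode3_apply, Matrix.one_apply, Finset.sum_ite_eq]

lemma mode3_sub_apply (A B : ι → Matrix α β ℂ) (M : Matrix ι ι ℂ) (i : ι) :
    mode3 A M i - mode3 B M i = mode3 (fun j => A j - B j) M i := by
  ext a b
  simp [mode3_apply, Matrix.sub_apply, mul_sub, Finset.sum_sub_distrib]

lemma mode3_cancel [DecidableEq ι] {M N : Matrix ι ι ℂ} (h : N * M = 1)
    (A : ι → Matrix α β ℂ) : mode3 (mode3 A M) N = A := by
  rw [mode3_mode3, h, mode3_one]

end mode3lemmas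

section hatlemmas
variable {ι : Type*} [Fintype ι] [DecidableEq ι] {α β γ : Type*} [Fintype α] [Fintype β]
  [Fintype γ] {M : Matrix ι ι ℂ}

lemma hat_tprodM_apply (hMr : M * M⁻¹ = 1) (A : ι → Matrix α β ℂ) (B : ι → Matrix β γ ℂ)
    (i : ι) : mode3 (tprodM M A B) M i = mode3 A M i * mode3 B M i :=
  congrFun (mode3_cancel hMr _) i

lemma hat_tconj_apply (hMr : M * M⁻¹ = 1) (A : ι → Matrix α β ℂ) (i : ι) :
    mode3 (tconj M A) M i = (mode3 A M i)ᴴ :=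
  congrFun (mode3_cancel hMr _) i

lemma hat_tId_apply [DecidableEq α] (hMr : M * M⁻¹ = 1) (i : ι) :
    mode3 (tId α M) M i = (1 : Matrix α α ℂ) :=
  congrFun (mode3_cancel hMr _) i

lemma slice_unitary_left [DecidableEq α] (hMr : M * M⁻¹ = 1) {Q : ι → Matrix α α ℂ}
    (hQ : tprodM M (tconj M Q) Q = tId α M) (i : ι) :
    (mode3 Q M i)ᴴ * mode3 Q M i = 1 := by
  have h1 : mode3 (tprodM M (tconj M Q) Q) M i = mode3 (tId α M) M i := by rw [hQ]
  rw [hat_tprodM_apply hMr, hat_tId_apply hMr, hat_tconj_apply hMr] at h1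
  exact h1

lemma slice_unitary_right [DecidableEq α] (hMr : M * M⁻¹ = 1) {Q : ι → Matrix α α ℂ}
    (hQ : tprodM M Q (tconj M Q) = tId α M) (i : ι) :
    mode3 Q M i * (mode3 Q M i)ᴴ = 1 := by
  have h1 : mode3 (tprodM M Q (tconj M Q)) M i = mode3 (tId α M) M i := by rw [hQ]
  rw [hat_tprodM_apply hMr, hat_tId_apply hMr, hat_tconj_apply hMr] at h1
  exact h1

end hatlemmas

/-! ## squared Frobenius norms -/

def msq {α β : Type*} [Fintype α] [Fintype β] (A : Matrix α β ℂ) : ℝ :=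
  ∑ a, ∑ b, ‖A a b‖ ^ 2

lemma msq_nonneg {α β : Type*} [Fintype α] [Fintype β] (A : Matrix α β ℂ) : 0 ≤ msq A :=
  Finset.sum_nonneg fun _ _ => Finset.sum_nonneg fun _ _ => pow_nonneg (norm_nonneg _) 2

section msqlem
variable {α β : Type*} [Fintype α] [Fintype β] [DecidableEq α] [DecidableEq β]

lemma coe_norm_sq (z : ℂ) : (↑‖z‖ : ℂ) ^ 2 = star z * z := by
  have := RCLike.conj_mul (K := ℂ) z
  rw [RCLike.star_def, this]
  norm_cast

lemma msq_coe (Z : Matrix α β ℂ) : (↑(msq Z) : ℂ) = Matrix.trace (Zᴴ * Z) := by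
  simp only [msq, Matrix.trace, Matrix.diag, Matrix.mul_apply, Matrix.conjTranspose_apply]
  push_cast
  simp_rw [coe_norm_sq]
  rw [Finset.sum_comm]

lemma msq_mul_proj_coe {P : Matrix β β ℂ} (hP : Pᴴ = P) (hP2 : P * P = P)
    (Y : Matrix α β ℂ) : (↑(msq (Y * P)) : ℂ) = Matrix.trace (Yᴴ * Y * P) := by
  rw [msq_coe]
  have e : (Y * P)ᴴ * (Y * P) = P * (Yᴴ * Y) * P := by
    rw [Matrix.conjTranspose_mul, hP]
    simp only [Matrix.mul_assoc]
  rw [e, Matrix.mul_assoc, Matrix.trace_mul_comm P (Yᴴ * Y * P), Matrix.mul_assoc, hP2]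

lemma msq_mul_proj_le {P : Matrix β β ℂ} (hP : Pᴴ = P) (hP2 : P * P = P)
    (Y : Matrix α β ℂ) : msq (Y * P) ≤ msq Y := by
  have hQ : (1 - P)ᴴ = 1 - P := by
    rw [Matrix.conjTranspose_sub, hP, Matrix.conjTranspose_one]
  have hQ2 : (1 - P) * (1 - P) = 1 - P := by
    rw [Matrix.sub_mul, Matrix.mul_sub, Matrix.mul_sub, hP2]
    simp
  have key : (↑(msq Y) : ℂ) = ↑(msq (Y * P)) + ↑(msq (Y * (1 - P))) := by
    rw [msq_mul_proj_coe hP hP2, msq_mul_proj_coe hQ hQ2, ← Matrix.trace_add, Matrix.mul_sub,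
      Matrix.mul_one]
    have : Yᴴ * Y * P + (Yᴴ * Y - Yᴴ * Y * P) = Yᴴ * Y := by abel
    rw [this, msq_coe]
  have key' : msq Y = msq (Y * P) + msq (Y * (1 - P)) := by exact_mod_cast key
  linarith [msq_nonneg (Y * (1 - P))]

lemma conjT_mul_self (U : Matrix α α ℂ) (X : Matrix α β ℂ) (V : Matrix β β ℂ)
    (hU : Uᴴ * U = 1) : (U * X * Vᴴ)ᴴ * (U * X * Vᴴ) = V * (Xᴴ * X) * Vᴴ := by
  simp only [Matrix.conjTranspose_mul, Matrix.conjTranspose_conjTranspose]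
  simp only [Matrix.mul_assoc]
  rw [← Matrix.mul_assoc Uᴴ U (X * Vᴴ), hU, Matrix.one_mul]

lemma msq_unitary_mul {U : Matrix α α ℂ} {V : Matrix β β ℂ}
    (hU : Uᴴ * U = 1) (hV : Vᴴ * V = 1) (X : Matrix α β ℂ) :
    msq (U * X * Vᴴ) = msq X := by
  have : (↑(msq (U * X * Vᴴ)) : ℂ) = ↑(msq X) := by
    rw [msq_coe, msq_coe, conjT_mul_self U X V hU,
      Matrix.trace_mul_comm (V * (Xᴴ * X)) Vᴴ, ← Matrix.mul_assoc Vᴴ V, hV, Matrix.one_mul]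
  exact_mod_cast this

end msqlem

/-! ## transform-domain norm identities -/

lemma sum_sq_transform {n : ℕ} (W : Matrix (Fin n) (Fin n) ℂ) (hW : Wᴴ * W = 1)
    (v : Fin n → ℂ) : ∑ i, ‖∑ j, W i j * v j‖ ^ 2 = ∑ j, ‖v j‖ ^ 2 := by
  have h1 : ∀ z : ℂ, (‖z‖ : ℂ) ^ 2 = conj z * z := by
    intro z; rw [RCLike.conj_mul]; norm_cast
  have key : (↑(∑ i, ‖∑ j, W i j * v j‖ ^ 2) : ℂ) = ↑(∑ j, ‖v j‖ ^ 2) := by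
    push_cast
    simp_rw [h1]
    calc ∑ i, conj (∑ j, W i j * v j) * (∑ j, W i j * v j)
        = ∑ i, ∑ j, ∑ l, (conj (W i j) * W i l) * (conj (v j) * v l) := by
          congr 1; ext i
          rw [map_sum, Finset.sum_mul_sum]
          congr 1; ext j; congr 1; ext l
          simp only [_root_.map_mul]; ring
      _ = ∑ j, ∑ l, (Wᴴ * W) j l * (conj (v j) * v l) := by
          rw [Finset.sum_comm]
          congr 1; ext j
          rw [Finset.sum_comm]
          congr 1; ext l
          rw [← Finset.sum_mul, Matrix.mul_apply]
          simp [Matrix.conjTranspose_apply]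
      _ = ∑ j, conj (v j) * v j := by
          rw [hW]
          congr 1; ext j
          simp [Matrix.one_apply, Finset.sum_ite_eq]
  exact_mod_cast key

lemma sum_msq_mode3 {n : ℕ} {α β : Type*} [Fintype α] [Fintype β]
    (W' : Matrix (Fin n) (Fin n) ℂ) (hW' : W'ᴴ * W' = 1) (c' : ℂ)
    (G : Fin n → Matrix α β ℂ) :
    ∑ i, msq (mode3 G (c' • W') i) = ‖c'‖ ^ 2 * ∑ i, msq (G i) := by
  have key : ∀ (a : α) (b : β),
      ∑ i, ‖mode3 G (c' • W') i a b‖ ^ 2 = ‖c'‖ ^ 2 * ∑ j, ‖G j a b‖ ^ 2 := by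
    intro a b
    have h1 : ∀ i : Fin n, mode3 G (c' • W') i a b = ∑ j, W' i j * (c' * G j a b) := by
      intro i
      rw [mode3_apply]
      refine Finset.sum_congr rfl fun j _ => ?_
      rw [Matrix.smul_apply, smul_eq_mul]
      ring
    simp_rw [h1]
    rw [sum_sq_transform W' hW' (fun j => c' * G j a b), Finset.mul_sum]
    refine Finset.sum_congr rfl fun j _ => ?_
    rw [norm_mul, mul_pow]
  simp only [msq]
  calc ∑ i, ∑ a, ∑ b, ‖mode3 G (c' • W') i a b‖ ^ 2
      = ∑ a, ∑ i, ∑ b, ‖mode3 G (c' • W') i a b‖ ^ 2 := Finset.sum_comm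
    _ = ∑ a, ∑ b, ∑ i, ‖mode3 G (c' • W') i a b‖ ^ 2 :=
        Finset.sum_congr rfl fun a _ => Finset.sum_comm
    _ = ∑ a, ∑ b, ‖c'‖ ^ 2 * ∑ j, ‖G j a b‖ ^ 2 :=
        Finset.sum_congr rfl fun a _ => Finset.sum_congr rfl fun b _ => key a b
    _ = ‖c'‖ ^ 2 * ∑ a, ∑ b, ∑ j, ‖G j a b‖ ^ 2 := by
        rw [Finset.mul_sum]
        refine Finset.sum_congr rfl fun a _ => ?_
        rw [Finset.mul_sum]
    _ = ‖c'‖ ^ 2 * ∑ j, ∑ a, ∑ b, ‖G j a b‖ ^ 2 := by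
        congr 1
        calc ∑ a, ∑ b, ∑ j, ‖G j a b‖ ^ 2
            = ∑ a, ∑ j, ∑ b, ‖G j a b‖ ^ 2 :=
              Finset.sum_congr rfl fun a _ => Finset.sum_comm
          _ = ∑ j, ∑ a, ∑ b, ‖G j a b‖ ^ 2 := Finset.sum_comm

lemma msq_prod_rows {α ι β : Type*} [Fintype α] [Fintype ι] [Fintype β]
    (E : Matrix (α × ι) β ℂ) :
    msq E = ∑ i : ι, msq (Matrix.of fun (a : α) (b : β) => E (a, i) b) := by
  simp only [msq, Matrix.of_apply]
  rw [Fintype.sum_prod_type]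
  exact Finset.sum_comm

lemma tnorm_eq_sqrt {ι α β : Type*} [Fintype ι] [Fintype α] [Fintype β]
    (X : ι → Matrix α β ℂ) : tnorm X = Real.sqrt (∑ i, msq (X i)) := by
  rw [tnorm]
  congr 1
  refine Finset.sum_congr rfl fun i _ => ?_
  show Real.sqrt (msq (X i)) ^ 2 = msq (X i)
  exact Real.sq_sqrt (msq_nonneg (X i))

/-! ## truncation slice algebra -/

lemma slice_diff {m p : ℕ} (k : ℕ) (Uh : Matrix (Fin m) (Fin m) ℂ)
    (Sh : Matrix (Fin m) (Fin p) ℂ) (Vh : Matrix (Fin p) (Fin p) ℂ) :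
    Uh * Sh * Vhᴴ - truncSlice k Uh Sh Vh
      = Uh * (Matrix.of fun (j : Fin m) (l : Fin p) =>
          if (j : ℕ) < k ∧ (l : ℕ) < k then 0 else Sh j l) * Vhᴴ := by
  ext a b
  have hfull : ∀ (G : Matrix (Fin m) (Fin p) ℂ), (Uh * G * Vhᴴ) a b
      = ∑ j, ∑ l, Uh a j * G j l * star (Vh b l) := by
    intro G
    calc (Uh * G * Vhᴴ) a b
        = ∑ l, (∑ j, Uh a j * G j l) * star (Vh b l) := by
          rw [Matrix.mul_apply]
          refine Finset.sum_congr rfl fun l _ => ?_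
          rw [Matrix.mul_apply, Matrix.conjTranspose_apply]
      _ = ∑ l, ∑ j, Uh a j * G j l * star (Vh b l) := by
          refine Finset.sum_congr rfl fun l _ => ?_
          rw [Finset.sum_mul]
      _ = ∑ j, ∑ l, Uh a j * G j l * star (Vh b l) := Finset.sum_comm
  rw [Matrix.sub_apply, hfull Sh, hfull _]
  simp only [truncSlice, Matrix.of_apply]
  rw [← Finset.sum_sub_distrib]
  refine Finset.sum_congr rfl fun j _ => ?_
  rw [← Finset.sum_sub_distrib]
  refine Finset.sum_congr rfl fun l _ => ?_
  by_cases hcond : (j : ℕ) < k ∧ (l : ℕ) < k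
  · rw [if_pos hcond, if_pos hcond]; ring
  · rw [if_neg hcond, if_neg hcond]; ring

lemma msq_Sprime {m p : ℕ} (k : ℕ) (Sh : Matrix (Fin m) (Fin p) ℂ)
    (hdiag : ∀ (a : Fin m) (b : Fin p), (a : ℕ) ≠ (b : ℕ) → Sh a b = 0) :
    msq (Matrix.of fun (j : Fin m) (l : Fin p) =>
        if (j : ℕ) < k ∧ (l : ℕ) < k then 0 else Sh j l)
      = ∑ l : Fin p, (if k ≤ (l : ℕ) then ∑ a, ‖Sh a l‖ ^ 2 else 0) := by
  simp only [msq, Matrix.of_apply]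
  rw [Finset.sum_comm]
  refine Finset.sum_congr rfl fun l _ => ?_
  by_cases hl : k ≤ (l : ℕ)
  · rw [if_pos hl]
    refine Finset.sum_congr rfl fun a _ => ?_
    rw [if_neg (by omega)]
  · rw [if_neg hl]
    refine Finset.sum_eq_zero fun a _ => ?_
    by_cases ha : (a : ℕ) < k
    · rw [if_pos ⟨ha, by omega⟩]
      simp
    · rw [if_neg (fun hcon => ha hcon.1), hdiag a l (by omega)]
      simp

lemma rank_slice_le {m n ℓ : ℕ} (M : Matrix (Fin n) (Fin n) ℂ)
    (B : Matrix (Fin m × Fin n) (Fin ℓ) ℂ) (i : Fin n) :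
    Matrix.rank (Matrix.of fun (a : Fin m) (j : Fin ℓ) => ∑ i', M i i' * B (a, i') j)
      ≤ Matrix.rank B := by
  have e : (Matrix.of fun (a : Fin m) (j : Fin ℓ) => ∑ i', M i i' * B (a, i') j)
      = (Matrix.of fun (a : Fin m) (ai' : Fin m × Fin n) =>
          if ai'.1 = a then M i ai'.2 else 0) * B := by
    ext a j
    rw [Matrix.of_apply, Matrix.mul_apply, Fintype.sum_prod_type, Finset.sum_eq_single a]
    · refine Finset.sum_congr rfl fun i' _ => ?_
      simp
    · intro a' _ ha'
      refine Finset.sum_eq_zero fun i' _ => ?_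
      simp [ha']
    · intro habs
      exact absurd (Finset.mem_univ _) habs
  rw [e]
  exact Matrix.rank_mul_le_right _ _

/-! ## pivot inequality -/

lemma pivot {ℓ k : ℕ} (hk : k ≤ ℓ) (d t : Fin ℓ → ℝ)
    (hd0 : ∀ l, 0 ≤ d l) (hdm : ∀ l l' : Fin ℓ, l ≤ l' → d l' ≤ d l)
    (ht0 : ∀ l, 0 ≤ t l) (ht1 : ∀ l, t l ≤ 1)
    (hsum : (ℓ : ℝ) - k ≤ ∑ l, t l) :
    ∑ l : Fin ℓ, (if k ≤ (l : ℕ) then d l else 0) ≤ ∑ l, d l * t l := by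
  rcases eq_or_lt_of_le hk with rfl | hlt
  · have h0 : ∀ l : Fin k, (if k ≤ (l : ℕ) then d l else 0) = 0 := by
      intro l; rw [if_neg (not_le.mpr l.isLt)]
    rw [Finset.sum_congr rfl fun l _ => h0 l, Finset.sum_const_zero]
    exact Finset.sum_nonneg fun l _ => mul_nonneg (hd0 l) (ht0 l)
  · set K : Fin ℓ := ⟨k, hlt⟩ with hK
    have hcount : ∑ l : Fin ℓ, (if k ≤ (l : ℕ) then (1 : ℝ) else 0) = (ℓ : ℝ) - k := by
      rw [Finset.sum_ite, Finset.sum_const_zero, add_zero, Finset.sum_const, nsmul_eq_mul,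
        mul_one]
      have : Finset.filter (fun l : Fin ℓ => k ≤ (l : ℕ)) Finset.univ = Finset.Ici K := by
        ext l
        simp [Fin.le_def, hK]
      rw [this, Fin.card_Ici]
      simp [hK, Nat.cast_sub hk]
    have termwise : ∀ l : Fin ℓ,
        d K * (t l - (if k ≤ (l : ℕ) then 1 else 0)) ≤
          d l * t l - (if k ≤ (l : ℕ) then d l else 0) := by
      intro l
      by_cases hl : k ≤ (l : ℕ)
      · rw [if_pos hl, if_pos hl]
        have h1 : d l ≤ d K := hdm K l (by simpa [Fin.le_def, hK] using hl)
        nlinarith [ht1 l]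
      · rw [if_neg hl, if_neg hl]
        have h1 : d K ≤ d l := hdm l K (by simp [Fin.le_def, hK]; omega)
        nlinarith [ht0 l]
    have := Finset.sum_le_sum fun l (_ : l ∈ Finset.univ) => termwise l
    rw [← Finset.mul_sum, Finset.sum_sub_distrib, Finset.sum_sub_distrib, hcount] at this
    nlinarith [hd0 K]

/-! ## kernel projection -/

lemma exists_proj {m ℓ : ℕ} (C : Matrix (Fin m) (Fin ℓ) ℂ) :
    ∃ P : Matrix (Fin ℓ) (Fin ℓ) ℂ,
      Pᴴ = P ∧ P * P = P ∧ C * P = 0 ∧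
      Matrix.trace P = ((finrank ℂ (LinearMap.ker C.mulVecLin)) : ℂ) := by
  classical
  set e : EuclideanSpace ℂ (Fin ℓ) ≃ₗ[ℂ] (Fin ℓ → ℂ) :=
    WithLp.linearEquiv 2 ℂ (Fin ℓ → ℂ) with he
  set K : Submodule ℂ (EuclideanSpace ℂ (Fin ℓ)) :=
    (LinearMap.ker C.mulVecLin).map (e.symm : (Fin ℓ → ℂ) →ₗ[ℂ] EuclideanSpace ℂ (Fin ℓ))
    with hKdef
  have hfr : finrank ℂ K = finrank ℂ (LinearMap.ker C.mulVecLin) :=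
    LinearEquiv.finrank_map_eq e.symm _
  let w := stdOrthonormalBasis ℂ K
  let N := finrank ℂ K
  let f : Fin N → Fin ℓ → ℂ := fun r => e ((w r : EuclideanSpace ℂ (Fin ℓ)))
  have horth : ∀ r s, (∑ b, conj (f r b) * f s b) = if r = s then (1 : ℂ) else 0 := by
    intro r s
    have h1 := (orthonormal_iff_ite.mp w.orthonormal) r s
    rw [Submodule.coe_inner, PiLp.inner_apply] at h1
    simpa [RCLike.inner_apply, f, he, mul_comm] using h1
  have hker : ∀ r, C.mulVec (f r) = 0 := by
    intro r
    have hmem : (w r : EuclideanSpace ℂ (Fin ℓ)) ∈ K := (w r).2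
    obtain ⟨x, hx, hx2⟩ := Submodule.mem_map.mp hmem
    have : f r = x := by
      simp only [f, ← hx2]
      rfl
    rw [this]
    simpa [Matrix.mulVecLin_apply] using hx
  refine ⟨Matrix.of fun b b' => ∑ r, f r b * conj (f r b'), ?_, ?_, ?_, ?_⟩
  · ext b b'
    simp only [Matrix.conjTranspose_apply, Matrix.of_apply, star_sum, star_mul', star_star,
      RCLike.star_def, Complex.conj_conj]
    refine Finset.sum_congr rfl fun r _ => ?_
    ring
  · ext b b''
    simp only [Matrix.mul_apply, Matrix.of_apply]
    calc ∑ b', (∑ r, f r b * conj (f r b')) * (∑ s, f s b' * conj (f s b''))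
        = ∑ b', ∑ r, ∑ s, (f r b * conj (f s b'')) * (conj (f r b') * f s b') := by
          refine Finset.sum_congr rfl fun b' _ => ?_
          rw [Finset.sum_mul_sum]
          refine Finset.sum_congr rfl fun r _ => ?_
          refine Finset.sum_congr rfl fun s _ => ?_
          ring
      _ = ∑ r, ∑ b', ∑ s, (f r b * conj (f s b'')) * (conj (f r b') * f s b') :=
          Finset.sum_comm
      _ = ∑ r, ∑ s, (f r b * conj (f s b'')) * ∑ b', conj (f r b') * f s b' := by
          refine Finset.sum_congr rfl fun r _ => ?_
          rw [Finset.sum_comm]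
          refine Finset.sum_congr rfl fun s _ => ?_
          rw [Finset.mul_sum]
      _ = ∑ r, f r b * conj (f r b'') := by
          refine Finset.sum_congr rfl fun r _ => ?_
          simp only [horth]
          simp
  · ext a b'
    simp only [Matrix.mul_apply, Matrix.of_apply, Matrix.zero_apply, Finset.mul_sum]
    rw [Finset.sum_comm]
    have : ∀ r, ∑ b, C a b * (f r b * conj (f r b')) = 0 := by
      intro r
      have h0 : (∑ b, C a b * f r b) = 0 := congrFun (hker r) a
      calc ∑ b, C a b * (f r b * conj (f r b'))
          = (∑ b, C a b * f r b) * conj (f r b') := by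
            rw [Finset.sum_mul]; congr 1; ext b; ring
        _ = 0 := by rw [h0, zero_mul]
    simp [this]
  · rw [← hfr]
    simp only [Matrix.trace, Matrix.diag, Matrix.of_apply]
    rw [Finset.sum_comm]
    have : ∀ r, ∑ b, f r b * conj (f r b) = 1 := by
      intro r
      have := horth r r
      rw [if_pos rfl] at this
      rw [← this]
      congr 1; ext b; ring
    simp [this, N]

/-! ## Eckart–Young lower bound -/

lemma EY_lower {m ℓ : ℕ} {k : ℕ} (hkl : k ≤ ℓ)
    (Uh : Matrix (Fin m) (Fin m) ℂ) (Sh : Matrix (Fin m) (Fin ℓ) ℂ)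
    (Vh : Matrix (Fin ℓ) (Fin ℓ) ℂ)
    (hU : Uhᴴ * Uh = 1) (hV : Vhᴴ * Vh = 1) (hV' : Vh * Vhᴴ = 1)
    (hdiag : ∀ (a : Fin m) (b : Fin ℓ), (a : ℕ) ≠ (b : ℕ) → Sh a b = 0)
    (hreal : ∀ (a : Fin m) (b : Fin ℓ), (a : ℕ) = (b : ℕ) → ∃ r : ℝ, 0 ≤ r ∧ Sh a b = r)
    (hmono : ∀ (a a' : Fin m) (b b' : Fin ℓ), (a : ℕ) = (b : ℕ) → (a' : ℕ) = (b' : ℕ) →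
        (a : ℕ) ≤ (a' : ℕ) → (Sh a' b').re ≤ (Sh a b).re)
    (C : Matrix (Fin m) (Fin ℓ) ℂ) (hC : Matrix.rank C ≤ k) :
    ∑ l : Fin ℓ, (if k ≤ (l : ℕ) then ∑ a, ‖Sh a l‖ ^ 2 else 0)
      ≤ msq (Uh * Sh * Vhᴴ - C) := by
  classical
  obtain ⟨P, hPh, hP2, hCP, htrP⟩ := exists_proj C
  set d : Fin ℓ → ℝ := fun l => ∑ a, ‖Sh a l‖ ^ 2 with hd
  set σ : Fin ℓ → ℝ := fun l => if h : (l : ℕ) < m then (Sh ⟨(l : ℕ), h⟩ l).re else 0 with hσ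
  have hσ0 : ∀ l, 0 ≤ σ l := by
    intro l
    rw [hσ]
    by_cases h : (l : ℕ) < m
    · obtain ⟨r, hr0, hr⟩ := hreal ⟨(l : ℕ), h⟩ l rfl
      simp [h, hr, hr0]
    · simp [h]
  have hdσ : ∀ l, d l = σ l ^ 2 := by
    intro l
    rw [hd, hσ]
    by_cases h : (l : ℕ) < m
    · simp only [dif_pos h]
      rw [Finset.sum_eq_single ⟨(l : ℕ), h⟩]
      · obtain ⟨r, hr0, hr⟩ := hreal ⟨(l : ℕ), h⟩ l rfl
        rw [hr]
        rw [Complex.norm_real, Real.norm_eq_abs, abs_of_nonneg hr0]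
        simp [hr]
      · intro a _ ha
        rw [hdiag a l (by simpa [Fin.ext_iff] using ha), norm_zero]
        simp
      · intro habs
        exact absurd (Finset.mem_univ _) habs
    · simp only [dif_neg h]
      have : ∀ a : Fin m, Sh a l = 0 := fun a => hdiag a l (by omega)
      simp [this]
  have hσm : ∀ l l' : Fin ℓ, l ≤ l' → σ l' ≤ σ l := by
    intro l l' hll
    rw [hσ]
    by_cases h' : (l' : ℕ) < m
    · have h : (l : ℕ) < m := lt_of_le_of_lt hll h'
      simp only [dif_pos h', dif_pos h]
      exact hmono ⟨(l : ℕ), h⟩ ⟨(l' : ℕ), h'⟩ l l' rfl rfl hll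
    · simp only [dif_neg h']
      exact hσ0 l
  have hd0 : ∀ l, 0 ≤ d l := fun l => by rw [hdσ]; positivity
  have hdm : ∀ l l' : Fin ℓ, l ≤ l' → d l' ≤ d l := by
    intro l l' hll
    rw [hdσ, hdσ]
    exact pow_le_pow_left₀ (hσ0 l') (hσm l l' hll) 2
  set Q : Matrix (Fin ℓ) (Fin ℓ) ℂ := Vhᴴ * P * Vh with hQdef
  have hQh : Qᴴ = Q := by
    rw [hQdef]
    simp only [Matrix.conjTranspose_mul, Matrix.conjTranspose_conjTranspose, hPh]
    rw [Matrix.mul_assoc]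
  have hQ2 : Q * Q = Q := by
    rw [hQdef]
    calc Vhᴴ * P * Vh * (Vhᴴ * P * Vh) = Vhᴴ * (P * ((Vh * Vhᴴ) * (P * Vh))) := by
          simp only [Matrix.mul_assoc]
      _ = Vhᴴ * P * Vh := by
          rw [hV', Matrix.one_mul, ← Matrix.mul_assoc P P Vh, hP2, Matrix.mul_assoc]
  set t : Fin ℓ → ℝ := fun l => (Q l l).re with ht
  have hQdiag : ∀ l, Q l l = ((∑ l', ‖Q l' l‖ ^ 2 : ℝ) : ℂ) := by
    intro l
    conv_lhs => rw [← hQ2]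
    rw [Matrix.mul_apply]
    push_cast
    refine Finset.sum_congr rfl fun l' _ => ?_
    have : Q l l' = conj (Q l' l) := by
      conv_lhs => rw [← hQh]
      simp [Matrix.conjTranspose_apply]
    rw [this, coe_norm_sq]
    rw [RCLike.star_def]
  have ht0 : ∀ l, 0 ≤ t l := by
    intro l
    show 0 ≤ (Q l l).re
    rw [hQdiag l]
    simp only [Complex.ofReal_re]
    positivity
  have ht1 : ∀ l, t l ≤ 1 := by
    intro l
    have h1 : t l = ∑ l', ‖Q l' l‖ ^ 2 := by
      show (Q l l).re = _
      rw [hQdiag l, Complex.ofReal_re]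
    have h2 : ‖Q l l‖ ^ 2 ≤ ∑ l', ‖Q l' l‖ ^ 2 :=
      Finset.single_le_sum (f := fun l' => ‖Q l' l‖ ^ 2)
        (fun _ _ => pow_nonneg (norm_nonneg _) 2) (Finset.mem_univ l)
    have h3 : ‖Q l l‖ = t l := by
      show _ = (Q l l).re
      rw [hQdiag l, Complex.norm_real, Complex.ofReal_re, Real.norm_eq_abs]
      exact abs_of_nonneg (Finset.sum_nonneg fun _ _ => pow_nonneg (norm_nonneg _) 2)
    nlinarith [ht0 l]
  have htrQ : Matrix.trace Q = ((finrank ℂ (LinearMap.ker C.mulVecLin)) : ℂ) := by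
    rw [hQdef, Matrix.trace_mul_comm (Vhᴴ * P) Vh, ← Matrix.mul_assoc, hV', Matrix.one_mul,
      htrP]
  have hsumt : ∑ l, t l = ((finrank ℂ (LinearMap.ker C.mulVecLin)) : ℝ) := by
    have : (Matrix.trace Q).re = ((finrank ℂ (LinearMap.ker C.mulVecLin)) : ℝ) := by
      rw [htrQ]; simp
    rw [← this]
    simp only [Matrix.trace, Matrix.diag]
    exact (Complex.re_sum Finset.univ _).symm
  have hrn : Matrix.rank C + finrank ℂ (LinearMap.ker C.mulVecLin) = ℓ := by
    have h1 := LinearMap.finrank_range_add_finrank_ker C.mulVecLin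
    rwa [Module.finrank_fintype_fun_eq_card, Fintype.card_fin] at h1
  have hsum : (ℓ : ℝ) - k ≤ ∑ l, t l := by
    rw [hsumt]
    have h1 : (Matrix.rank C : ℝ) ≤ k := by exact_mod_cast hC
    have h2 : (Matrix.rank C : ℝ) + (finrank ℂ (LinearMap.ker C.mulVecLin) : ℝ) = ℓ := by
      exact_mod_cast hrn
    linarith
  have hpivot := pivot hkl d t hd0 hdm ht0 ht1 hsum
  set X : Matrix (Fin m) (Fin ℓ) ℂ := Uh * Sh * Vhᴴ with hX
  set D : Matrix (Fin ℓ) (Fin ℓ) ℂ := Shᴴ * Sh with hD2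
  have hDoff : ∀ l l' : Fin ℓ, l ≠ l' → D l l' = 0 := by
    intro l l' hll
    rw [hD2, Matrix.mul_apply]
    refine Finset.sum_eq_zero fun a _ => ?_
    rcases eq_or_ne ((a : Fin m) : ℕ) ((l : Fin ℓ) : ℕ) with hal | hal
    · have : ((a : Fin m) : ℕ) ≠ ((l' : Fin ℓ) : ℕ) := by
        rw [hal]; exact fun hcon => hll (Fin.ext hcon)
      rw [hdiag a l' this, mul_zero]
    · rw [Matrix.conjTranspose_apply, hdiag a l hal]
      simp
  have hDl : ∀ l, D l l = ((d l : ℝ) : ℂ) := by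
    intro l
    rw [hD2, Matrix.mul_apply, hd]
    push_cast
    refine Finset.sum_congr rfl fun a _ => ?_
    rw [coe_norm_sq, Matrix.conjTranspose_apply, RCLike.star_def]
  have htrDQ : Matrix.trace (D * Q) = ∑ l, ((d l : ℝ) : ℂ) * Q l l := by
    simp only [Matrix.trace, Matrix.diag]
    refine Finset.sum_congr rfl fun l _ => ?_
    rw [Matrix.mul_apply, Finset.sum_eq_single l]
    · rw [hDl]
    · intro l' _ hll
      rw [hDoff l l' (Ne.symm hll), zero_mul]
    · intro habs; exact absurd (Finset.mem_univ _) habs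
  have hXX : Xᴴ * X = Vh * D * Vhᴴ := by
    rw [hX, hD2, conjT_mul_self Uh Sh Vh hU, Matrix.mul_assoc]
  have htrX : Matrix.trace (Xᴴ * X * P) = Matrix.trace (D * Q) := by
    rw [hXX, hQdef]
    calc Matrix.trace (Vh * D * Vhᴴ * P)
        = Matrix.trace (Vh * (D * (Vhᴴ * P))) := by simp only [Matrix.mul_assoc]
      _ = Matrix.trace (D * (Vhᴴ * P) * Vh) := by
          rw [Matrix.trace_mul_comm Vh (D * (Vhᴴ * P))]
      _ = Matrix.trace (D * (Vhᴴ * P * Vh)) := by simp only [Matrix.mul_assoc]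
  have hmsqXP : msq (X * P) = ∑ l, d l * t l := by
    have h1 : (↑(msq (X * P)) : ℂ) = Matrix.trace (Xᴴ * X * P) := msq_mul_proj_coe hPh hP2 X
    have h2 : msq (X * P) = (Matrix.trace (Xᴴ * X * P)).re := by
      rw [← h1, Complex.ofReal_re]
    rw [h2, htrX, htrDQ, Complex.re_sum]
    refine Finset.sum_congr rfl fun l _ => ?_
    rw [Complex.re_ofReal_mul]
  have hYP : (X - C) * P = X * P := by
    rw [Matrix.sub_mul, hCP, sub_zero]
  have hfinal : msq (X * P) ≤ msq (X - C) := by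
    rw [← hYP]
    exact msq_mul_proj_le hPh hP2 (X - C)
  calc ∑ l : Fin ℓ, (if k ≤ (l : ℕ) then ∑ a, ‖Sh a l‖ ^ 2 else 0)
      = ∑ l : Fin ℓ, (if k ≤ (l : ℕ) then d l else 0) := by rw [hd]
    _ ≤ ∑ l, d l * t l := hpivot
    _ = msq (X * P) := hmsqXP.symm
    _ ≤ msq (X - C) := hfinal

end Stmt10Aux

/-- tensor truncation beats matrix truncation: the t-rank-k truncation of the
data tensor approximates the data at least as well as any rank-≤k matrix approximates the
unfolded data matrix. -/
theorem stmt10 {m n ℓ : ℕ} (D : Fin ℓ → Matrix (Fin m) (Fin n) ℂ)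
    (W : Matrix (Fin n) (Fin n) ℂ) (hW : W ∈ Matrix.unitaryGroup (Fin n) ℂ)
    (c : ℂ) (hc : c ≠ 0)
    (U : Fin n → Matrix (Fin m) (Fin m) ℂ)
    (S : Fin n → Matrix (Fin m) (Fin ℓ) ℂ)
    (V : Fin n → Matrix (Fin ℓ) (Fin ℓ) ℂ)
    (h : IsTSVDM (c • W) (fun i => Matrix.of fun a j => D j a i) U S V)
    (k : ℕ) (hk : k ≤ min m ℓ)
    (B : Matrix (Fin m × Fin n) (Fin ℓ) ℂ) (hB : Matrix.rank B ≤ k) :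
    tnorm (fun i =>
        (Matrix.of fun (a : Fin m) (j : Fin ℓ) => D j a i) -
          truncTensor (c • W) U S V (fun _ => k) i) ≤
      fnorm ((Matrix.of fun (ai : Fin m × Fin n) (j : Fin ℓ) => D j ai.1 ai.2) - B) := by
  classical
  open Stmt10Aux in
  have hkl : k ≤ ℓ := le_trans hk (min_le_right m ℓ)
  have hWl : Wᴴ * W = 1 := by
    have := Unitary.star_mul_self_of_mem hW
    rwa [Matrix.star_eq_conjTranspose] at this
  have hWr : W * Wᴴ = 1 := by
    have := Unitary.mul_star_self_of_mem hW
    rwa [Matrix.star_eq_conjTranspose] at this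
  set M : Matrix (Fin n) (Fin n) ℂ := c • W with hMdef
  have hMinv : M⁻¹ = c⁻¹ • Wᴴ := by
    apply Matrix.inv_eq_left_inv
    rw [hMdef, Matrix.smul_mul, Matrix.mul_smul, smul_smul, inv_mul_cancel₀ hc, hWl, one_smul]
  have hMl : M⁻¹ * M = 1 := by
    rw [hMinv, hMdef, Matrix.smul_mul, Matrix.mul_smul, smul_smul, inv_mul_cancel₀ hc, hWl,
      one_smul]
  have hMr : M * M⁻¹ = 1 := by
    rw [hMinv, hMdef, Matrix.mul_smul, Matrix.smul_mul, smul_smul, inv_mul_cancel₀ hc, hWr,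
      one_smul]
  obtain ⟨hA, hUuni, hVuni, hdiag, hreal, hmono⟩ := h
  set At : Fin n → Matrix (Fin m) (Fin ℓ) ℂ := fun i => Matrix.of fun a j => D j a i with hAt
  set Amat : Matrix (Fin m × Fin n) (Fin ℓ) ℂ := Matrix.of fun ai j => D j ai.1 ai.2 with hAm
  show tnorm (fun i => At i - truncTensor M U S V (fun _ => k) i) ≤ fnorm (Amat - B)
  set Uh : Fin n → Matrix (Fin m) (Fin m) ℂ := mode3 U M with hUh
  set Sh : Fin n → Matrix (Fin m) (Fin ℓ) ℂ := mode3 S M with hSh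
  set Vh : Fin n → Matrix (Fin ℓ) (Fin ℓ) ℂ := mode3 V M with hVh
  have hUU : ∀ i, (Uh i)ᴴ * Uh i = 1 := fun i => slice_unitary_left hMr hUuni.1 i
  have hVV : ∀ i, (Vh i)ᴴ * Vh i = 1 := fun i => slice_unitary_left hMr hVuni.1 i
  have hVV' : ∀ i, Vh i * (Vh i)ᴴ = 1 := fun i => slice_unitary_right hMr hVuni.2 i
  have hAhat : ∀ i, mode3 At M i = Uh i * Sh i * (Vh i)ᴴ := by
    intro i
    rw [hA, hat_tprodM_apply hMr, hat_tprodM_apply hMr, hat_tconj_apply hMr]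
  set T : Fin n → Matrix (Fin m) (Fin ℓ) ℂ := fun i => truncSlice k (Uh i) (Sh i) (Vh i)
    with hT
  have hLdiff : ∀ i, At i - truncTensor M U S V (fun _ => k) i
      = mode3 (fun j => mode3 At M j - T j) M⁻¹ i := by
    intro i
    have h1 : At i = mode3 (mode3 At M) M⁻¹ i := by
      rw [mode3_cancel hMl]
    have h2 : truncTensor M U S V (fun _ => k) i = mode3 T M⁻¹ i := rfl
    rw [h1, h2, mode3_sub_apply]
  have tnorm_left : tnorm (fun i => At i - truncTensor M U S V (fun _ => k) i)
      = Real.sqrt (∑ i, msq (mode3 (fun j => mode3 At M j - T j) M⁻¹ i)) := by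
    rw [tnorm_eq_sqrt]
    congr 1
    exact Finset.sum_congr rfl fun i _ => by rw [hLdiff i]
  have hWconj : (Wᴴ)ᴴ * Wᴴ = 1 := by rw [Matrix.conjTranspose_conjTranspose, hWr]
  have left_sum : ∑ i, msq (mode3 (fun j => mode3 At M j - T j) M⁻¹ i)
      = ‖c⁻¹‖ ^ 2 * ∑ i, msq (mode3 At M i - T i) := by
    rw [hMinv]
    exact sum_msq_mode3 Wᴴ hWconj c⁻¹ _
  have hslice : ∀ i, msq (mode3 At M i - T i)
      = ∑ l : Fin ℓ, (if k ≤ (l : ℕ) then ∑ a, ‖Sh i a l‖ ^ 2 else 0) := by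
    intro i
    rw [hAhat i]
    show msq (Uh i * Sh i * (Vh i)ᴴ - truncSlice k (Uh i) (Sh i) (Vh i)) = _
    rw [slice_diff k (Uh i) (Sh i) (Vh i), msq_unitary_mul (hUU i) (hVV i)]
    exact msq_Sprime k (Sh i) (fun a b hab => hdiag i a b hab)
  set Btens : Fin n → Matrix (Fin m) (Fin ℓ) ℂ := fun i => Matrix.of fun a j => B (a, i) j
    with hBt
  have hsplit : msq (Amat - B) = ∑ i, msq (At i - Btens i) := by
    rw [msq_prod_rows (Amat - B)]
    refine Finset.sum_congr rfl fun i _ => ?_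
    have he : (Matrix.of fun (a : Fin m) (b : Fin ℓ) => (Amat - B) (a, i) b)
        = At i - Btens i := by
      ext a j
      simp [hAm, hAt, hBt, Matrix.sub_apply]
    rw [he]
  have right_sum : ∑ i, msq (mode3 (fun j => At j - Btens j) M i)
      = ‖c‖ ^ 2 * msq (Amat - B) := by
    rw [hsplit, hMdef]
    exact sum_msq_mode3 W hWl c _
  have hCslice : ∀ i, mode3 (fun j => At j - Btens j) M i = mode3 At M i - mode3 Btens M i :=
    fun i => (mode3_sub_apply At Btens M i).symm
  have hrank : ∀ i, Matrix.rank (mode3 Btens M i) ≤ k := by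
    intro i
    have e : mode3 Btens M i = Matrix.of fun (a : Fin m) (j : Fin ℓ) =>
        ∑ i', M i i' * B (a, i') j := by
      ext a j
      rw [mode3_apply]
      simp [hBt]
    rw [e]
    exact le_trans (rank_slice_le M B i) hB
  have hEY : ∀ i, (∑ l : Fin ℓ, if k ≤ (l : ℕ) then ∑ a, ‖Sh i a l‖ ^ 2 else 0)
      ≤ msq (mode3 At M i - mode3 Btens M i) := by
    intro i
    have hEYi := EY_lower hkl (Uh i) (Sh i) (Vh i) (hUU i) (hVV i) (hVV' i)
      (fun a b hab => hdiag i a b hab)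
      (fun a b hab => by
        obtain ⟨r, h0, hr⟩ := hreal i a b hab
        exact ⟨r, h0, by exact_mod_cast hr⟩)
      (fun a a' b b' h1 h2 h3 => by
        have := hmono i a a' b b' h1 h2 h3
        exact this)
      (mode3 Btens M i) (hrank i)
    rw [hAhat i]
    exact hEYi
  have hcpos : (0 : ℝ) < ‖c‖ ^ 2 := pow_pos (norm_pos_iff.mpr hc) 2
  have main : ∑ i, msq (mode3 (fun j => mode3 At M j - T j) M⁻¹ i) ≤ msq (Amat - B) := by
    rw [left_sum]
    have h1 : ∑ i, msq (mode3 At M i - T i)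
        ≤ ∑ i, msq (mode3 At M i - mode3 Btens M i) := by
      refine Finset.sum_le_sum fun i _ => ?_
      rw [hslice i]
      exact hEY i
    have h2 : ∑ i, msq (mode3 At M i - mode3 Btens M i) = ‖c‖ ^ 2 * msq (Amat - B) := by
      rw [← right_sum]
      exact Finset.sum_congr rfl fun i _ => by rw [hCslice i]
    calc ‖c⁻¹‖ ^ 2 * ∑ i, msq (mode3 At M i - T i)
        ≤ ‖c⁻¹‖ ^ 2 * (‖c‖ ^ 2 * msq (Amat - B)) := by
          apply mul_le_mul_of_nonneg_left _ (by positivity)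
          rw [← h2]; exact h1
      _ = msq (Amat - B) := by
          rw [norm_inv, inv_pow, ← mul_assoc, inv_mul_cancel₀ (ne_of_gt hcpos), one_mul]
  rw [tnorm_left]
  have hrhs : fnorm (Amat - B) = Real.sqrt (msq (Amat - B)) := rfl
  rw [hrhs]
  exact Real.sqrt_le_sqrt main
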